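/- (Remark 1.5 of the paper.) Suppose in addition that R is decreasing (antitone) on (−∞, α₀]. Then the defining inequality of the class 𝔑_{α₀,α} holds for ALL t ∈ (−∞, α₀): ∫_t^{α₀} (1/(α·R(α₀)) + ∫_{t₂}^{α₀} dt₁/R(t₁)) dt₂ + 1/(α²·R(α₀)) < R(t)·(1/(α·R(α₀)) + ∫_t^{α₀} dt₁/R(t₁))². -/

import Mathlib

open MeasureTheory

/-- (Remark 1.5.) Let `α > 0`, `α₀ ∈ ℝ`, and `R : (−∞, α₀] → (0, ∞)` smooth and
positive with `∫_{−∞}^{α₀} dt/R(t) < +∞`. If moreover `R` is decreasing (antitone)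
on `(−∞, α₀]`, then the defining inequality of the class `𝔑_{α₀,α}` holds for all
`t < α₀`:
`∫_t^{α₀} (1/(α·R(α₀)) + ∫_{t₂}^{α₀} dt₁/R(t₁)) dt₂ + 1/(α²·R(α₀))
  < R(t)·(1/(α·R(α₀)) + ∫_t^{α₀} dt₁/R(t₁))²`. -/
theorem stmt_7 (α α₀ : ℝ) (hα : 0 < α) (R : ℝ → ℝ)
    (hRpos : ∀ s ≤ α₀, 0 < R s)
    (hRsmooth : ContDiffOn ℝ (⊤ : ℕ∞) R (Set.Iic α₀))
    (hRint : IntegrableOn (fun s => 1 / R s) (Set.Iic α₀))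
    (hRanti : AntitoneOn R (Set.Iic α₀)) :
    ∀ t < α₀,
      (∫ u in t..α₀, (1 / (α * R α₀) + ∫ v in u..α₀, 1 / R v)) +
          1 / (α ^ 2 * R α₀) <
        R t * (1 / (α * R α₀) + ∫ u in t..α₀, 1 / R u) ^ 2 := by
  intro t ht
  have hRα₀ : 0 < R α₀ := hRpos α₀ le_rfl
  set c : ℝ := 1 / (α * R α₀) with hc
  have hc0 : 0 < c := by positivity
  set Q : ℝ → ℝ := fun s => R (min s α₀) with hQdef
  have hQpos : ∀ s, 0 < Q s := fun s => hRpos _ (min_le_right _ _)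
  have hQcont : Continuous Q := by
    exact hRsmooth.continuousOn.comp_continuous
      (continuous_id.min continuous_const) (fun s => min_le_right s α₀)
  have h1Q : Continuous (fun s => 1 / Q s) :=
    continuous_const.div hQcont fun s => (hQpos s).ne'
  set G : ℝ → ℝ := fun u => c + ∫ v in u..α₀, 1 / Q v with hGdef
  have hGderiv : ∀ u, HasDerivAt G (-(1 / Q u)) u := by
    intro u
    have h := intervalIntegral.integral_hasDerivAt_left
      (h1Q.intervalIntegrable u α₀)
      (h1Q.stronglyMeasurable.stronglyMeasurableAtFilter)
      h1Q.continuousAt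
    exact h.const_add c
  have hGcont : Continuous G := by
    rw [continuous_iff_continuousAt]; exact fun u => (hGderiv u).continuousAt
  have hGpos : ∀ u ∈ Set.Icc t α₀, 0 < G u := by
    intro u hu
    have h0 : 0 ≤ ∫ v in u..α₀, 1 / Q v :=
      intervalIntegral.integral_nonneg hu.2 fun v _ => (one_div_nonneg).mpr (hQpos v).le
    show 0 < c + ∫ v in u..α₀, 1 / Q v
    linarith
  have hQR : ∀ u ≤ α₀, (∫ v in u..α₀, 1 / R v) = ∫ v in u..α₀, 1 / Q v := by
    intro u hu
    apply intervalIntegral.integral_congr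
    intro v hv
    rw [Set.uIcc_of_le hu] at hv
    simp [hQdef, min_eq_left hv.2]
  have hG0 : G α₀ = c := by simp [hGdef]
  have hFTC : (∫ u in t..α₀, -(2 * G u * (1 / Q u))) = G α₀ ^ 2 - G t ^ 2 := by
    apply intervalIntegral.integral_eq_sub_of_hasDerivAt
    · intro u hu
      have h := (hGderiv u).fun_pow 2
      exact h.congr_deriv (by push_cast; ring)
    · exact (((continuous_const.mul hGcont).mul h1Q).neg).intervalIntegrable t α₀
  have hkey : (∫ u in t..α₀, 2 * G u * (1 / Q u)) = G t ^ 2 - c ^ 2 := by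
    have := hFTC
    rw [intervalIntegral.integral_neg, hG0] at this
    linarith
  -- lower bound: R t * ∫ 2G/Q ≥ ∫ 2G
  have hmul : (∫ u in t..α₀, 2 * G u) ≤ R t * ∫ u in t..α₀, 2 * G u * (1 / Q u) := by
    rw [← intervalIntegral.integral_const_mul]
    apply intervalIntegral.integral_mono_on ht.le
      ((continuous_const.mul hGcont).intervalIntegrable t α₀)
      ((continuous_const.mul ((continuous_const.mul hGcont).mul h1Q)).intervalIntegrable t α₀)
    intro u hu
    have hQu : Q u = R u := by simp [hQdef, min_eq_left hu.2]
    have hRu : 0 < R u := hRpos u hu.2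
    have hRtu : R u ≤ R t := hRanti (Set.mem_Iic.mpr (hu.1.trans hu.2)) (Set.mem_Iic.mpr hu.2) hu.1
    have hGu : 0 < G u := hGpos u hu
    have heq : R t * (2 * G u * (1 / Q u)) = (2 * G u * R t) / R u := by
      rw [hQu]; ring
    show 2 * G u ≤ R t * (2 * G u * (1 / Q u))
    rw [heq, le_div_iff₀ hRu]
    nlinarith
  have hRtu' : R α₀ ≤ R t := hRanti (Set.mem_Iic.mpr ht.le) (Set.mem_Iic.mpr le_rfl) ht.le
  have h2G : (∫ u in t..α₀, 2 * G u) = 2 * ∫ u in t..α₀, G u :=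
    intervalIntegral.integral_const_mul 2 G
  have hGlb : (α₀ - t) * c ≤ ∫ u in t..α₀, G u := by
    have h := intervalIntegral.integral_mono_on ht.le
      (intervalIntegrable_const : IntervalIntegrable (fun _ => c) volume t α₀) (hGcont.intervalIntegrable t α₀)
      (fun u hu => by
        have h0 : 0 ≤ ∫ v in u..α₀, 1 / Q v :=
          intervalIntegral.integral_nonneg hu.2 fun v _ => (one_div_nonneg).mpr (hQpos v).le
        show c ≤ c + ∫ v in u..α₀, 1 / Q v
        linarith)
    rwa [intervalIntegral.integral_const, smul_eq_mul] at h
  have hGintpos : 0 < ∫ u in t..α₀, G u := by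
    have h1 : 0 < α₀ - t := by linarith
    nlinarith
  -- rewrite the statement in terms of G
  have hLHS : (∫ u in t..α₀, (1 / (α * R α₀) + ∫ v in u..α₀, 1 / R v))
      = ∫ u in t..α₀, G u := by
    apply intervalIntegral.integral_congr
    intro u hu
    rw [Set.uIcc_of_le ht.le] at hu
    show c + (∫ v in u..α₀, 1 / R v) = G u
    rw [hQR u hu.2]
  have hRHS : (1 / (α * R α₀) + ∫ u in t..α₀, 1 / R u) = G t := by
    show c + (∫ u in t..α₀, 1 / R u) = G t
    rw [hQR t ht.le]
  have hconst : 1 / (α ^ 2 * R α₀) = R α₀ * c ^ 2 := by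
    rw [hc]; field_simp
  rw [hLHS, hRHS, hconst]
  -- final chain
  have hRc : R α₀ * c ^ 2 ≤ R t * c ^ 2 :=
    mul_le_mul_of_nonneg_right hRtu' (by positivity)
  have hexp : R t * G t ^ 2 = R t * c ^ 2 + R t * ∫ u in t..α₀, 2 * G u * (1 / Q u) := by
    have h := hkey
    nlinarith [hkey]
  calc (∫ u in t..α₀, G u) + R α₀ * c ^ 2
      < 2 * (∫ u in t..α₀, G u) + R α₀ * c ^ 2 := by linarith
    _ ≤ (R t * ∫ u in t..α₀, 2 * G u * (1 / Q u)) + R t * c ^ 2 := by linarith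
    _ = R t * G t ^ 2 := by linarith
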